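/- Let F : ℝ^p → ℝ be bounded below with locally Lipschitz gradient, and let x_{k+1} = x_k − M_k ∇F(x_k) where M_k are symmetric positive definite, ∑_k λ_min(M_k) = ∞, and λ_max(M_k) → 0. If sup_k ‖x_k‖ < ∞, then lim_{k→∞} F(x_k) exists and is finite, and liminf_{k→∞} ‖∇F(x_k)‖ = 0. -/

import Mathlib

open Filter Matrix RealInnerProductSpace Set
set_option linter.unusedSectionVars false
set_option maxHeartbeats 1000000

/-- Smallest eigenvalue of a Hermitian real matrix. -/
noncomputable def lamMin {p : ℕ} [NeZero p] {M : Matrix (Fin p) (Fin p) ℝ}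
    (hM : M.IsHermitian) : ℝ :=
  Finset.univ.inf' Finset.univ_nonempty hM.eigenvalues

/-- Largest eigenvalue of a Hermitian real matrix. -/
noncomputable def lamMax {p : ℕ} [NeZero p] {M : Matrix (Fin p) (Fin p) ℝ}
    (hM : M.IsHermitian) : ℝ :=
  Finset.univ.sup' Finset.univ_nonempty hM.eigenvalues

section aux
variable {p : ℕ} [NeZero p] {A : Matrix (Fin p) (Fin p) ℝ}

lemma toEuclideanLin_eigenvectorBasis (hA : A.IsHermitian) (i : Fin p) :
    A.toEuclideanLin (hA.eigenvectorBasis i) = hA.eigenvalues i • hA.eigenvectorBasis i := by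
  apply (WithLp.equiv 2 (Fin p → ℝ)).injective
  simpa using hA.mulVec_eigenvectorBasis i

lemma repr_toEuclideanLin (hA : A.IsHermitian) (v : EuclideanSpace ℝ (Fin p)) (i : Fin p) :
    hA.eigenvectorBasis.repr (A.toEuclideanLin v) i
      = hA.eigenvalues i * hA.eigenvectorBasis.repr v i := by
  rw [OrthonormalBasis.repr_apply_apply, OrthonormalBasis.repr_apply_apply]
  have hsym : (A.toEuclideanLin : _ →ₗ[ℝ] _).IsSymmetric :=
    (Matrix.isHermitian_iff_isSymmetric).1 hA
  rw [← hsym (hA.eigenvectorBasis i) v, toEuclideanLin_eigenvectorBasis hA i,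
    inner_smul_left]
  simp

lemma inner_toEuclideanLin_eq_sum (hA : A.IsHermitian) (v : EuclideanSpace ℝ (Fin p)) :
    ⟪v, A.toEuclideanLin v⟫
      = ∑ i, hA.eigenvalues i * (hA.eigenvectorBasis.repr v i)^2 := by
  rw [← hA.eigenvectorBasis.repr.inner_map_map v (A.toEuclideanLin v)]
  rw [PiLp.inner_apply]
  refine Finset.sum_congr rfl fun i _ => ?_
  rw [repr_toEuclideanLin hA v i]
  simp [RCLike.inner_apply]
  ring

lemma norm_sq_eq_sum_repr (hA : A.IsHermitian) (v : EuclideanSpace ℝ (Fin p)) :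
    ‖v‖^2 = ∑ i, (hA.eigenvectorBasis.repr v i)^2 := by
  rw [← hA.eigenvectorBasis.repr.norm_map v]
  rw [EuclideanSpace.norm_eq]
  rw [Real.sq_sqrt (by positivity)]
  simp [sq_abs]

lemma norm_sq_toEuclideanLin (hA : A.IsHermitian) (v : EuclideanSpace ℝ (Fin p)) :
    ‖A.toEuclideanLin v‖^2 = ∑ i, (hA.eigenvalues i)^2 * (hA.eigenvectorBasis.repr v i)^2 := by
  rw [norm_sq_eq_sum_repr hA]
  refine Finset.sum_congr rfl fun i _ => ?_
  rw [repr_toEuclideanLin hA v i, mul_pow]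

lemma lamMin_pos (hA : A.PosDef) : 0 < lamMin hA.1 := by
  obtain ⟨i, -, hi⟩ := Finset.exists_mem_eq_inf' (Finset.univ_nonempty) hA.1.eigenvalues
  rw [lamMin, hi]
  exact hA.eigenvalues_pos i

lemma lamMax_pos (hA : A.PosDef) : 0 < lamMax hA.1 := by
  obtain ⟨i, -, hi⟩ := Finset.exists_mem_eq_sup' (Finset.univ_nonempty) hA.1.eigenvalues
  rw [lamMax, hi]
  exact hA.eigenvalues_pos i

lemma lamMin_le_inner (hA : A.PosDef) (v : EuclideanSpace ℝ (Fin p)) :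
    lamMin hA.1 * ‖v‖^2 ≤ ⟪v, A.toEuclideanLin v⟫ := by
  rw [inner_toEuclideanLin_eq_sum hA.1, norm_sq_eq_sum_repr hA.1, Finset.mul_sum]
  refine Finset.sum_le_sum fun i _ => ?_
  exact mul_le_mul_of_nonneg_right (Finset.inf'_le _ (Finset.mem_univ i)) (sq_nonneg _)

lemma norm_sq_le_lamMax_mul_inner (hA : A.PosDef) (v : EuclideanSpace ℝ (Fin p)) :
    ‖A.toEuclideanLin v‖^2 ≤ lamMax hA.1 * ⟪v, A.toEuclideanLin v⟫ := by
  rw [inner_toEuclideanLin_eq_sum hA.1, norm_sq_toEuclideanLin hA.1, Finset.mul_sum]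
  refine Finset.sum_le_sum fun i _ => ?_
  have h1 : hA.1.eigenvalues i ≤ lamMax hA.1 := Finset.le_sup' _ (Finset.mem_univ i)
  have h2 : 0 < hA.1.eigenvalues i := hA.eigenvalues_pos i
  nlinarith [mul_nonneg (mul_nonneg (sub_nonneg.2 h1) h2.le) (sq_nonneg (hA.1.eigenvectorBasis.repr v i))]

lemma norm_toEuclideanLin_le (hA : A.PosDef) (v : EuclideanSpace ℝ (Fin p)) :
    ‖A.toEuclideanLin v‖ ≤ lamMax hA.1 * ‖v‖ := by
  have h2 : ‖A.toEuclideanLin v‖^2 ≤ (lamMax hA.1 * ‖v‖)^2 := by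
    rw [norm_sq_toEuclideanLin hA.1, mul_pow, norm_sq_eq_sum_repr hA.1, Finset.mul_sum]
    refine Finset.sum_le_sum fun i _ => ?_
    refine mul_le_mul_of_nonneg_right (pow_le_pow_left₀ (hA.eigenvalues_pos i).le ?_ 2) (sq_nonneg _)
    exact Finset.le_sup' _ (Finset.mem_univ i)
  calc ‖A.toEuclideanLin v‖ = Real.sqrt (‖A.toEuclideanLin v‖^2) := by
        rw [Real.sqrt_sq (norm_nonneg _)]
    _ ≤ Real.sqrt ((lamMax hA.1 * ‖v‖)^2) := Real.sqrt_le_sqrt h2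
    _ = lamMax hA.1 * ‖v‖ := Real.sqrt_sq (mul_nonneg (lamMax_pos hA).le (norm_nonneg _))

end aux

lemma descent_lemma {E : Type*} [NormedAddCommGroup E] [InnerProductSpace ℝ E] [CompleteSpace E]
    {F : E → ℝ} (hdiff : Differentiable ℝ F) {L : ℝ} (a d : E)
    (hlip : ∀ t ∈ Set.Icc (0:ℝ) 1,
      ‖gradient F (a + t • d) - gradient F a‖ ≤ L * (t * ‖d‖)) :
    F (a + d) ≤ F a + ⟪gradient F a, d⟫ + L / 2 * ‖d‖ ^ 2 := by
  set g0 := gradient F a with hg0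
  have hc : ∀ t : ℝ, HasDerivAt (fun t : ℝ => F (a + t • d))
      (⟪gradient F (a + t • d), d⟫) t := by
    intro t
    have h1 : HasDerivAt (fun t : ℝ => a + t • d) d t := by
      simpa using ((hasDerivAt_id t).smul_const d).const_add a
    have h2 : HasFDerivAt F
        ((InnerProductSpace.toDual ℝ E) (gradient F (a + t • d))) (a + t • d) :=
      hasGradientAt_iff_hasFDerivAt.1 (hdiff (a + t • d)).hasGradientAt
    have h3 := h2.comp_hasDerivAt t h1
    exact h3
  set φ : ℝ → ℝ := fun t => F (a + t • d) - t * ⟪g0, d⟫ - L / 2 * ‖d‖ ^ 2 * t ^ 2 with hφ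
  have hφ' : ∀ t : ℝ, HasDerivAt φ
      (⟪gradient F (a + t • d), d⟫ - ⟪g0, d⟫ - L / 2 * ‖d‖ ^ 2 * (2 * t)) t := by
    intro t
    have := ((hc t).sub (hasDerivAt_mul_const ⟪g0, d⟫)).sub
      (((hasDerivAt_pow 2 t)).const_mul (L / 2 * ‖d‖ ^ 2))
    exact this.congr_deriv (by simp)
  have hanti : AntitoneOn φ (Icc (0:ℝ) 1) := by
    apply antitoneOn_of_deriv_nonpos (convex_Icc 0 1)
    · have : Continuous φ := by
        have h1 : Continuous fun t : ℝ => F (a + t • d) :=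
          hdiff.continuous.comp (continuous_const.add (continuous_id.smul continuous_const))
        exact (h1.sub (continuous_id.mul continuous_const)).sub
          (continuous_const.mul (continuous_pow 2))
      exact this.continuousOn
    · intro t ht
      exact ((hφ' t).differentiableAt).differentiableWithinAt
    · intro t ht
      rw [interior_Icc] at ht
      rw [(hφ' t).deriv]
      have hb : ⟪gradient F (a + t • d) - g0, d⟫ ≤ L * (t * ‖d‖) * ‖d‖ := by
        calc ⟪gradient F (a + t • d) - g0, d⟫ ≤ ‖gradient F (a + t • d) - g0‖ * ‖d‖ :=
              real_inner_le_norm _ _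
          _ ≤ L * (t * ‖d‖) * ‖d‖ := by
              apply mul_le_mul_of_nonneg_right _ (norm_nonneg d)
              exact hlip t ⟨ht.1.le, ht.2.le⟩
      rw [inner_sub_left] at hb
      nlinarith [norm_nonneg d]
  have h01 := hanti (Set.left_mem_Icc.2 zero_le_one) (Set.right_mem_Icc.2 zero_le_one) zero_le_one
  have hφ0 : φ 0 = F a := by simp [hφ]
  have hφ1 : φ 1 = F (a + d) - ⟪g0, d⟫ - L / 2 * ‖d‖ ^ 2 := by simp [hφ]
  rw [hφ0, hφ1] at h01
  linarith

/-- Global convergence without summability: if `F` is bounded below with locally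
Lipschitz gradient, the step sizes are symmetric positive definite with
`∑ λ_min(M_k) = ∞` and `λ_max(M_k) → 0`, and the iterates remain bounded, then
`F(x_k)` converges to a finite limit and `liminf ‖∇F(x_k)‖ = 0`. -/
theorem zoutendijk_without_summability {p : ℕ} [NeZero p]
    (F : EuclideanSpace ℝ (Fin p) → ℝ) (F_lb : ℝ)
    (hbd : ∀ x, F_lb ≤ F x)
    (hdiff : Differentiable ℝ F)
    (hlip : ∀ K : Set (EuclideanSpace ℝ (Fin p)), IsCompact K →
      ∃ L : ℝ, 0 ≤ L ∧ ∀ x ∈ K, ∀ y ∈ K, ‖gradient F x - gradient F y‖ ≤ L * ‖x - y‖)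
    (M : ℕ → Matrix (Fin p) (Fin p) ℝ)
    (hM : ∀ k, (M k).PosDef)
    (hdiv : Tendsto (fun n => ∑ k ∈ Finset.range n, lamMin (hM k).1) atTop atTop)
    (hmax0 : Tendsto (fun k => lamMax (hM k).1) atTop (nhds 0))
    (x : ℕ → EuclideanSpace ℝ (Fin p))
    (hx : ∀ k, x (k + 1) = x k - (M k).toEuclideanLin (gradient F (x k)))
    (hbound : ∃ B : ℝ, ∀ k, ‖x k‖ ≤ B) :
    (∃ l : ℝ, Tendsto (fun k => F (x k)) atTop (nhds l)) ∧
      Filter.liminf (fun k => ‖gradient F (x k)‖) atTop = 0 := by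
  classical
  obtain ⟨B, hB⟩ := hbound
  set g : ℕ → EuclideanSpace ℝ (Fin p) := fun k => gradient F (x k) with hgdef
  set mmin : ℕ → ℝ := fun k => lamMin (hM k).1 with hmmindef
  set mmax : ℕ → ℝ := fun k => lamMax (hM k).1 with hmmaxdef
  have hB0 : 0 ≤ B := (norm_nonneg (x 0)).trans (hB 0)
  -- bound on gradients along the iterates
  obtain ⟨L0, hL00, hL0⟩ := hlip (Metric.closedBall 0 B) (isCompact_closedBall 0 B)
  set G : ℝ := L0 * (2 * B) + ‖gradient F 0‖ with hGdef
  have hG : ∀ k, ‖g k‖ ≤ G := by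
    intro k
    have hxk : x k ∈ Metric.closedBall (0 : EuclideanSpace ℝ (Fin p)) B := by
      simpa [Metric.mem_closedBall, dist_eq_norm] using hB k
    have h0m : (0 : EuclideanSpace ℝ (Fin p)) ∈ Metric.closedBall (0 : EuclideanSpace ℝ (Fin p)) B := by
      simpa [Metric.mem_closedBall] using hB0
    have h1 := hL0 (x k) hxk 0 h0m
    have h2 : ‖x k - 0‖ ≤ 2 * B := by simpa using (hB k).trans (by linarith)
    have h3 : ‖g k - gradient F 0‖ ≤ L0 * (2 * B) := by
      refine h1.trans ?_
      exact mul_le_mul_of_nonneg_left h2 hL00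
    have h5 := norm_sub_norm_le (g k) (gradient F 0)
    rw [hGdef]; linarith
  have hG0 : 0 ≤ G := (norm_nonneg (g 0)).trans (hG 0)
  -- uniform bound on lamMax
  obtain ⟨N0, hN0⟩ := (eventually_atTop.1 (hmax0.eventually_le_const (by norm_num : (0:ℝ) < 1)))
  have hmmax_pos : ∀ k, 0 < mmax k := fun k => lamMax_pos (hM k)
  set C : ℝ := 1 + ∑ j ∈ Finset.range N0, mmax j with hCdef
  have hC0 : 0 < C := by
    have : 0 ≤ ∑ j ∈ Finset.range N0, mmax j :=
      Finset.sum_nonneg fun j _ => (hmmax_pos j).le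
    rw [hCdef]; linarith
  have hC : ∀ k, mmax k ≤ C := by
    intro k
    rcases lt_or_ge k N0 with hk | hk
    · have h1 : mmax k ≤ ∑ j ∈ Finset.range N0, mmax j :=
        Finset.single_le_sum (fun j _ => (hmmax_pos j).le) (Finset.mem_range.2 hk)
      rw [hCdef]; linarith
    · have h1 := hN0 k hk
      have : 0 ≤ ∑ j ∈ Finset.range N0, mmax j :=
        Finset.sum_nonneg fun j _ => (hmmax_pos j).le
      rw [hCdef]; linarith
  -- step vectors
  set d : ℕ → EuclideanSpace ℝ (Fin p) := fun k => (M k).toEuclideanLin (g k) with hddef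
  have hd : ∀ k, ‖d k‖ ≤ C * G := by
    intro k
    calc ‖d k‖ ≤ mmax k * ‖g k‖ := norm_toEuclideanLin_le (hM k) (g k)
      _ ≤ C * G := mul_le_mul (hC k) (hG k) (norm_nonneg _) hC0.le
  set R : ℝ := B + C * G with hRdef
  obtain ⟨L, hL0', hLip⟩ := hlip (Metric.closedBall 0 R) (isCompact_closedBall 0 R)
  -- descent inequality
  have key : ∀ k, F (x (k + 1)) ≤ F (x k) - (1 - L / 2 * mmax k) * ⟪g k, d k⟫ := by
    intro k
    have hseg : ∀ t ∈ Set.Icc (0:ℝ) 1,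
        ‖gradient F (x k + t • (-(d k))) - gradient F (x k)‖ ≤ L * (t * ‖-(d k)‖) := by
      intro t ht
      have hmem1 : x k + t • (-(d k)) ∈ Metric.closedBall (0 : EuclideanSpace ℝ (Fin p)) R := by
        rw [Metric.mem_closedBall, dist_zero_right]
        calc ‖x k + t • (-(d k))‖ ≤ ‖x k‖ + ‖t • (-(d k))‖ := norm_add_le _ _
          _ ≤ B + t * ‖d k‖ := by
              rw [norm_smul, norm_neg, Real.norm_eq_abs, abs_of_nonneg ht.1]
              exact add_le_add (hB k) le_rfl
          _ ≤ B + C * G := by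
              refine add_le_add le_rfl ?_
              calc t * ‖d k‖ ≤ 1 * ‖d k‖ :=
                    mul_le_mul_of_nonneg_right ht.2 (norm_nonneg _)
                _ = ‖d k‖ := one_mul _
                _ ≤ C * G := hd k
      have hmem2 : x k ∈ Metric.closedBall (0 : EuclideanSpace ℝ (Fin p)) R := by
        rw [Metric.mem_closedBall, dist_zero_right]
        have : (0:ℝ) ≤ C * G := mul_nonneg hC0.le hG0
        calc ‖x k‖ ≤ B := hB k
          _ ≤ R := by rw [hRdef]; linarith
      have := hLip _ hmem1 _ hmem2
      refine this.trans ?_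
      have : x k + t • (-(d k)) - x k = t • (-(d k)) := by abel
      rw [this, norm_smul, Real.norm_eq_abs, abs_of_nonneg ht.1]
    have hdes := descent_lemma hdiff (x k) (-(d k)) hseg
    have hx1 : x (k + 1) = x k + (-(d k)) := by
      rw [hx k]; abel
    rw [← hx1] at hdes
    have hiprod : ⟪g k, -(d k)⟫ = -⟪g k, d k⟫ := inner_neg_right _ _
    have hnormsq : ‖-(d k)‖ ^ 2 ≤ mmax k * ⟪g k, d k⟫ := by
      rw [norm_neg]
      exact norm_sq_le_lamMax_mul_inner (hM k) (g k)
    have hL2 : (0:ℝ) ≤ L / 2 := by linarith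
    nlinarith [mul_le_mul_of_nonneg_left hnormsq hL2]
  -- inner product lower bound and positivity
  have hinner_lb : ∀ k, mmin k * ‖g k‖ ^ 2 ≤ ⟪g k, d k⟫ := fun k =>
    lamMin_le_inner (hM k) (g k)
  have hmmin_pos : ∀ k, 0 < mmin k := fun k => lamMin_pos (hM k)
  have hinner_nonneg : ∀ k, 0 ≤ ⟪g k, d k⟫ := by
    intro k
    have := hinner_lb k
    nlinarith [sq_nonneg ‖g k‖, (hmmin_pos k).le]
  -- eventual strong descent
  have htend : Tendsto (fun k => L / 2 * mmax k) atTop (nhds 0) := by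
    simpa using (hmax0.const_mul (L / 2))
  obtain ⟨N1, hN1⟩ := eventually_atTop.1 (htend.eventually_le_const (by norm_num : (0:ℝ) < 1/2))
  have key2 : ∀ k, N1 ≤ k → F (x (k + 1)) ≤ F (x k) - 1/2 * (mmin k * ‖g k‖ ^ 2) := by
    intro k hk
    have h1 := key k
    have h2 := hN1 k hk
    have h3 := hinner_lb k
    have h4 := hinner_nonneg k
    nlinarith
  have hdec : ∀ k, N1 ≤ k → F (x (k + 1)) ≤ F (x k) := by
    intro k hk
    have := key2 k hk
    nlinarith [sq_nonneg ‖g k‖, (hmmin_pos k).le, mul_nonneg (hmmin_pos k).le (sq_nonneg ‖g k‖)]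
  -- Part 1: convergence of F (x k)
  have hconv : ∃ l : ℝ, Tendsto (fun k => F (x k)) atTop (nhds l) := by
    have hanti : Antitone (fun n => F (x (n + N1))) := by
      apply antitone_nat_of_succ_le
      intro n
      have := hdec (n + N1) (Nat.le_add_left _ _)
      simpa [Nat.add_right_comm] using this
    have hbdd : BddBelow (Set.range fun n => F (x (n + N1))) :=
      ⟨F_lb, fun y ⟨n, hn⟩ => hn ▸ hbd _⟩
    have := tendsto_atTop_ciInf hanti hbdd
    exact ⟨_, (tendsto_add_atTop_iff_nat N1).1 this⟩
  refine ⟨hconv, ?_⟩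
  -- Part 2: liminf = 0
  have hbddA : IsBoundedUnder (· ≤ ·) atTop (fun k => ‖g k‖) :=
    ⟨G, eventually_map.2 (Eventually.of_forall hG)⟩
  have hcob : IsCoboundedUnder (· ≥ ·) atTop (fun k => ‖g k‖) :=
    hbddA.isCoboundedUnder_ge
  refine le_antisymm ?_ ?_
  · by_contra hpos
    push_neg at hpos
    set ε : ℝ := liminf (fun k => ‖g k‖) atTop / 2 with hεdef
    have hε : 0 < ε := by positivity
    have hev : ∀ᶠ k in atTop, ε < ‖g k‖ :=
      eventually_lt_of_lt_liminf (by rw [hεdef]; linarith)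
        ⟨0, eventually_map.2 (Eventually.of_forall fun k => norm_nonneg _)⟩
    obtain ⟨N2, hN2⟩ := eventually_atTop.1 hev
    set N' : ℕ := max N1 N2 with hN'def
    set S : ℕ → ℝ := fun n => ∑ k ∈ Finset.range n, mmin k with hSdef
    have tel : ∀ m, N' ≤ m → F (x m) ≤ F (x N') - ε ^ 2 / 2 * (S m - S N') := by
      intro m hm
      induction m, hm using Nat.le_induction with
      | base => simp
      | succ m hm ih =>
        have hm1 : N1 ≤ m := le_trans (le_max_left _ _) hm
        have hm2 : N2 ≤ m := le_trans (le_max_right _ _) hm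
        have h1 := key2 m hm1
        have h2 : ε ≤ ‖g m‖ := (hN2 m hm2).le
        have h3 : ε ^ 2 ≤ ‖g m‖ ^ 2 := pow_le_pow_left₀ hε.le h2 2
        have h4 : S (m + 1) = S m + mmin m := Finset.sum_range_succ _ _
        have h5 : ε ^ 2 / 2 * mmin m ≤ 1/2 * (mmin m * ‖g m‖ ^ 2) := by
          nlinarith [(hmmin_pos m).le]
        rw [h4]
        linarith
    have hbnd : ∀ m, N' ≤ m → S m ≤ S N' + (F (x N') - F_lb) / (ε ^ 2 / 2) := by
      intro m hm
      have h1 := tel m hm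
      have h2 := hbd (x m)
      have h3 : ε ^ 2 / 2 * (S m - S N') ≤ F (x N') - F_lb := by linarith
      have h4 : (0:ℝ) < ε ^ 2 / 2 := by positivity
      rw [← sub_le_iff_le_add', le_div_iff₀ h4]
      nlinarith [h3]
    obtain ⟨m, hm1, hm2⟩ :=
      (((hdiv.eventually_gt_atTop (S N' + (F (x N') - F_lb) / (ε ^ 2 / 2)))).and
        (eventually_ge_atTop N')).exists
    exact absurd (hbnd m hm2) (not_le.2 hm1)
  · exact le_liminf_of_le hcob (Eventually.of_forall fun k => norm_nonneg _)
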